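/- Let (G,p) be a framework with G a triangulated Laman graph and p ∈ P_G, and let {(G_i, p_i)}_{i=1}^m be the frameworks associated with the independent partition for (G,p). Then each G_i is a triangulated Laman graph, and each (G_i, p_i) is a line framework, i.e., all the points of p_i are collinear. -/

import Mathlib

open scoped BigOperators

noncomputable section

/-- Points in the Euclidean plane. -/
abbrev Pt : Type := EuclideanSpace ℝ (Fin 2)

/-- The flattened space of planar configurations indexed by `ι`
(two real coordinates for each vertex). -/
abbrev Conf (ι : Type*) : Type _ := EuclideanSpace ℝ (ι × Fin 2)

/-- The position of agent `i` in the configuration `p`. -/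
def pt {ι : Type*} (p : Conf ι) (i : ι) : Pt := WithLp.toLp 2 (fun c => p (i, c))

/-- The sub-configuration of `p` on the vertices in `S`. -/
def restr {ι : Type*} (S : Set ι) (p : Conf ι) : Conf ↥S := WithLp.toLp 2 (fun ic : ↥S × Fin 2 => p ((ic.1 : ι), ic.2))

/-- The configuration space `P_G`: embeddings of the vertex set in the plane for which
adjacent vertices have distinct positions. -/
def configSpace {ι : Type*} (G : SimpleGraph ι) : Set (Conf ι) :=
  {p | ∀ i j : ι, G.Adj i j → pt p i ≠ pt p j}

/-- A Henneberg sequence for a triangulated Laman graph `G`, encoded by the order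
`ord` in which the vertices appear, and for every step `l ≥ 2` the two earlier steps
`par1 l`, `par2 l`, whose (adjacent) vertices the new vertex `ord l` is joined to.
The edges of `G` are exactly the initial edge together with the edges created at
each step. -/
structure Henneberg {ι : Type*} (G : SimpleGraph ι) : Type _ where
  two_le : 2 ≤ Nat.card ι
  ord : Fin (Nat.card ι) ≃ ι
  par1 : Fin (Nat.card ι) → Fin (Nat.card ι)
  par2 : Fin (Nat.card ι) → Fin (Nat.card ι)
  par1_lt : ∀ l : Fin (Nat.card ι), 2 ≤ (l : ℕ) → par1 l < l
  par2_lt : ∀ l : Fin (Nat.card ι), 2 ≤ (l : ℕ) → par2 l < l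
  par_ne : ∀ l : Fin (Nat.card ι), 2 ≤ (l : ℕ) → par1 l ≠ par2 l
  par_adj : ∀ l : Fin (Nat.card ι), 2 ≤ (l : ℕ) → G.Adj (ord (par1 l)) (ord (par2 l))
  edge_iff : ∀ i j : ι, G.Adj i j ↔
    (s(i, j) = s(ord ⟨0, by omega⟩, ord ⟨1, by omega⟩) ∨
      ∃ l : Fin (Nat.card ι), 2 ≤ (l : ℕ) ∧
        (s(i, j) = s(ord (par1 l), ord l) ∨ s(i, j) = s(ord (par2 l), ord l)))

/-- A graph is a triangulated Laman graph if it is (essentially) a single vertex, or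
it can be built by a Henneberg sequence in which each new vertex is joined to the two
endpoints of an existing edge. -/
def IsTriangulatedLaman {ι : Type*} (G : SimpleGraph ι) : Prop :=
  Nat.card ι ≤ 1 ∨ Nonempty (Henneberg G)

open Classical in
/-- The potential `Φ` induced by `G`, with control laws `f i j = u_{ij}(⬝, d̄_{ij})`:
`Φ(p) = Σ_{(i,j) ∈ E} ∫_1^{‖x_i - x_j‖} s u_{ij}(s, d̄_{ij}) ds`
(each edge is counted once; the double sum counts it twice, whence the factor 1/2). -/
def potential {ι : Type*} [Fintype ι] (G : SimpleGraph ι) (f : ι → ι → ℝ → ℝ)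
    (p : Conf ι) : ℝ :=
  (1 / 2) * ∑ i : ι, ∑ j : ι,
    if G.Adj i j then ∫ s in (1 : ℝ)..(dist (pt p i) (pt p j)), s * f i j s else 0

open Classical in
/-- The right-hand side of the formation control system
`ẋ_i = Σ_{j ∈ N_i} u_{ij}(‖x_i - x_j‖, d̄_{ij}) (x_j - x_i)`. -/
def formationField {ι : Type*} [Fintype ι] (G : SimpleGraph ι) (f : ι → ι → ℝ → ℝ)
    (p : Conf ι) : Conf ι :=
  WithLp.toLp 2 (fun ic : ι × Fin 2 => ∑ j : ι,
    if G.Adj ic.1 j then f ic.1 j (dist (pt p ic.1) (pt p j)) * (p (j, ic.2) - p (ic.1, ic.2))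
    else 0)

/-- A monotone attraction/repulsion function: `f` is C¹ on `ℝ_{>0}`,
`d(x f(x))/dx > 0` for `x > 0`, `f` has a unique (positive) zero, and
`∫_x^1 s f(s) ds → -∞` as `x → 0⁺`. -/
structure IsMonoAttRep (f : ℝ → ℝ) : Prop where
  contDiff : ContDiffOn ℝ 1 f (Set.Ioi 0)
  deriv_pos : ∀ x : ℝ, 0 < x → 0 < deriv (fun y => y * f y) x
  unique_zero : ∃! x : ℝ, 0 < x ∧ f x = 0
  collision : Filter.Tendsto (fun x : ℝ => ∫ s in x..(1 : ℝ), s * f s)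
    (nhdsWithin 0 (Set.Ioi 0)) Filter.atBot

/-- 2×2 rotation matrices. -/
def IsRotation (θ : Matrix (Fin 2) (Fin 2) ℝ) : Prop := θ * θ.transpose = 1 ∧ θ.det = 1

/-- The action of `γ = (θ, v) ∈ SE(2)` on configurations: `γ·p = (θ x_1 + v, …, θ x_n + v)`. -/
def se2Act {ι : Type*} (θ : Matrix (Fin 2) (Fin 2) ℝ) (v : Pt) (p : Conf ι) : Conf ι :=
  WithLp.toLp 2 (fun ic : ι × Fin 2 => θ.mulVec (pt p ic.1).ofLp ic.2 + v ic.2)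

/-- The SE(2)-orbit `O_p` of a configuration `p`. -/
def se2Orbit {ι : Type*} (p : Conf ι) : Set (Conf ι) :=
  {q | ∃ θ v, IsRotation θ ∧ q = se2Act θ v p}

/-- Rotation by 90 degrees. -/
def rotJ : Matrix (Fin 2) (Fin 2) ℝ := !![0, -1; 1, 0]

/-- The infinitesimal rotation of a configuration. -/
def infRot {ι : Type*} (p : Conf ι) : Conf ι := WithLp.toLp 2 (fun ic : ι × Fin 2 => rotJ.mulVec (pt p ic.1).ofLp ic.2)

/-- The infinitesimal translation in coordinate direction `c`. -/
def transl (ι : Type*) (c : Fin 2) : Conf ι := WithLp.toLp 2 (fun ic : ι × Fin 2 => if ic.2 = c then 1 else 0)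

/-- The tangent space at `p` of the SE(2)-orbit `O_p`. -/
def orbitTangent {ι : Type*} (p : Conf ι) : Submodule ℝ (Conf ι) :=
  Submodule.span ℝ {infRot p, transl ι 0, transl ι 1}

/-- The Hessian matrix `H_p = ∂²Φ(p)/∂p²`. -/
def hessianMat {ι : Type*} [Fintype ι] [DecidableEq ι] (Φ : Conf ι → ℝ) (p : Conf ι) :
    Matrix (ι × Fin 2) (ι × Fin 2) ℝ :=
  Matrix.of fun a b =>
    iteratedFDeriv ℝ 2 Φ p ![EuclideanSpace.single a 1, EuclideanSpace.single b 1]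

/-- The Hessian of `Φ` at `p` with respect to the coordinates of the vertices in `S`
(for `Φ` depending only on those coordinates this is the Hessian of the induced
function of the positions of the vertices in `S`). -/
def hessianMatOn {ι : Type*} [Fintype ι] [DecidableEq ι] (Φ : Conf ι → ℝ) (p : Conf ι) (S : Set ι) :
    Matrix (↥S × Fin 2) (↥S × Fin 2) ℝ :=
  Matrix.of fun a b => hessianMat Φ p ((a.1 : ι), a.2) ((b.1 : ι), b.2)

open Classical in
/-- `N₊(A)`: the number of positive eigenvalues of a real symmetric matrix,
counted with multiplicity. -/
def nPos {m : Type*} [Finite m] (A : Matrix m m ℝ) : ℕ :=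
  letI := Fintype.ofFinite m
  letI := Classical.decEq m
  if h : A.IsHermitian then Fintype.card {i // 0 < h.eigenvalues i} else 0

open Classical in
/-- `N₋(A)`: the number of negative eigenvalues of a real symmetric matrix,
counted with multiplicity. -/
def nNeg {m : Type*} [Finite m] (A : Matrix m m ℝ) : ℕ :=
  letI := Fintype.ofFinite m
  letI := Classical.decEq m
  if h : A.IsHermitian then Fintype.card {i // h.eigenvalues i < 0} else 0

open Classical in
/-- `N₀(A)`: the number of zero eigenvalues of a real symmetric matrix,
counted with multiplicity. -/
def nZero {m : Type*} [Finite m] (A : Matrix m m ℝ) : ℕ :=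
  letI := Fintype.ofFinite m
  letI := Classical.decEq m
  if h : A.IsHermitian then Fintype.card {i // h.eigenvalues i = 0} else 0

/-- `Φ` is an equivariant Morse function on `P_G`: it has finitely many critical orbits,
and each critical orbit is nondegenerate (the Hessian has exactly three zero eigenvalues). -/
def IsEquivariantMorse {ι : Type*} [Fintype ι] [DecidableEq ι] (G : SimpleGraph ι)
    (Φ : Conf ι → ℝ) : Prop :=
  {O : Set (Conf ι) | ∃ p ∈ configSpace G, gradient Φ p = 0 ∧ O = se2Orbit p}.Finite ∧
  ∀ p ∈ configSpace G, gradient Φ p = 0 → nZero (hessianMat Φ p) = 3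

/-- `i`, `j`, `k` form a 3-cycle of `G`. -/
def Is3Cycle {ι : Type*} (G : SimpleGraph ι) (i j k : ι) : Prop :=
  G.Adj i j ∧ G.Adj i k ∧ G.Adj j k

/-- A framework `(G, p)` is strongly rigid if every 3-cycle of `G` is embedded by `p`
as a nondegenerate triangle. -/
def StronglyRigid {ι : Type*} (G : SimpleGraph ι) (p : Conf ι) : Prop :=
  ∀ i j k : ι, Is3Cycle G i j k →
    LinearIndependent ℝ ![pt p j - pt p i, pt p k - pt p i]

/-- The target distances satisfy the strict triangle inequalities associated with `G`. -/
def StrictTriangleIneqs {ι : Type*} (G : SimpleGraph ι) (dbar : ι → ι → ℝ) : Prop :=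
  ∀ i j k : ι, Is3Cycle G i j k →
    dbar j k < dbar i j + dbar i k ∧ dbar i k < dbar i j + dbar j k ∧
      dbar i j < dbar i k + dbar j k

/-- A triangulated formation system: a formation control system induced by a
triangulated Laman graph, with target distances satisfying the strict triangle
inequalities, monotone attraction/repulsion control laws vanishing at the target
distances, and whose potential is an equivariant Morse function. -/
structure IsTriFormation {ι : Type*} [Fintype ι] [DecidableEq ι] (G : SimpleGraph ι)
    (f : ι → ι → ℝ → ℝ) (dbar : ι → ι → ℝ) : Prop where
  laman : IsTriangulatedLaman G
  fsymm : ∀ i j, f i j = f j i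
  dsymm : ∀ i j, dbar i j = dbar j i
  dpos : ∀ i j, G.Adj i j → 0 < dbar i j
  mono : ∀ i j, G.Adj i j → IsMonoAttRep (f i j)
  fzero : ∀ i j, G.Adj i j → f i j (dbar i j) = 0
  triangle : StrictTriangleIneqs G dbar
  morse : IsEquivariantMorse G (potential G f)

/-- The (critical) orbit of `p` is exponentially stable: the Hessian of `Φ` at `p` has
exactly three zero eigenvalues and no negative eigenvalues (all the others positive). -/
def ExpStableAt {ι : Type*} [Fintype ι] [DecidableEq ι] (Φ : Conf ι → ℝ) (p : Conf ι) : Prop :=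
  nZero (hessianMat Φ p) = 3 ∧ nNeg (hessianMat Φ p) = 0

/-- Generating relation for the independent partition: at each step `l ≥ 2` of the
Henneberg sequence in which the new vertex is aligned with its two parents, the two
new edges are related to the parent edge. -/
def triGen {ι : Type*} {G : SimpleGraph ι} (H : Henneberg G) (p : Conf ι) :
    Sym2 ι → Sym2 ι → Prop := fun e e' =>
  ∃ l : Fin (Nat.card ι), 2 ≤ (l : ℕ) ∧
    Collinear ℝ {pt p (H.ord (H.par1 l)), pt p (H.ord (H.par2 l)), pt p (H.ord l)} ∧
    e' = s(H.ord (H.par1 l), H.ord (H.par2 l)) ∧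
    (e = s(H.ord (H.par1 l), H.ord l) ∨ e = s(H.ord (H.par2 l), H.ord l))

/-- The independent partition of the edge set of `G` for the framework `(G, p)`,
computed along the Henneberg sequence `H`. -/
def indepPartition {ι : Type*} {G : SimpleGraph ι} (H : Henneberg G) (p : Conf ι) :
    Set (Set (Sym2 ι)) :=
  {C | ∃ e ∈ G.edgeSet, C = {e' | e' ∈ G.edgeSet ∧ Relation.EqvGen (triGen H p) e e'}}

/-- The set `V_i` of vertices incident to the edges in a class `C`. -/
def classVerts {ι : Type*} (C : Set (Sym2 ι)) : Set ι := {v | ∃ e ∈ C, v ∈ e}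

end

section Stmt5Aux

open Relation

variable {ι : Type*} {G : SimpleGraph ι}

/-- The parent edge at step `l`. -/
noncomputable def pedge (H : Henneberg G) (l : Fin (Nat.card ι)) : Sym2 ι :=
  s(H.ord (H.par1 l), H.ord (H.par2 l))

/-- The first child edge at step `l`. -/
noncomputable def child1 (H : Henneberg G) (l : Fin (Nat.card ι)) : Sym2 ι :=
  s(H.ord (H.par1 l), H.ord l)

/-- The second child edge at step `l`. -/
noncomputable def child2 (H : Henneberg G) (l : Fin (Nat.card ι)) : Sym2 ι :=
  s(H.ord (H.par2 l), H.ord l)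

/-- The index of an edge: the larger of the positions of its endpoints in the
Henneberg order. -/
noncomputable def eidx (H : Henneberg G) (e : Sym2 ι) : Fin (Nat.card ι) :=
  Sym2.lift ⟨fun i j => max (H.ord.symm i) (H.ord.symm j), fun i j => max_comm _ _⟩ e

lemma eidx_ord (H : Henneberg G) (a b : Fin (Nat.card ι)) :
    eidx H s(H.ord a, H.ord b) = max a b := by
  simp [eidx]

lemma eidx_child1 (H : Henneberg G) {l : Fin (Nat.card ι)} (h2 : 2 ≤ (l : ℕ)) :
    eidx H (child1 H l) = l := by
  rw [child1, eidx_ord, max_eq_right (H.par1_lt l h2).le]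

lemma eidx_child2 (H : Henneberg G) {l : Fin (Nat.card ι)} (h2 : 2 ≤ (l : ℕ)) :
    eidx H (child2 H l) = l := by
  rw [child2, eidx_ord, max_eq_right (H.par2_lt l h2).le]

lemma eidx_pedge_lt (H : Henneberg G) {l : Fin (Nat.card ι)} (h2 : 2 ≤ (l : ℕ)) :
    eidx H (pedge H l) < l := by
  rw [pedge, eidx_ord]
  exact max_lt (H.par1_lt l h2) (H.par2_lt l h2)

lemma pedge_mem (H : Henneberg G) {l : Fin (Nat.card ι)} (h2 : 2 ≤ (l : ℕ)) :
    pedge H l ∈ G.edgeSet := H.par_adj l h2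

lemma child1_mem (H : Henneberg G) {l : Fin (Nat.card ι)} (h2 : 2 ≤ (l : ℕ)) :
    child1 H l ∈ G.edgeSet := by
  rw [child1, SimpleGraph.mem_edgeSet, H.edge_iff]
  exact Or.inr ⟨l, h2, Or.inl rfl⟩

lemma child2_mem (H : Henneberg G) {l : Fin (Nat.card ι)} (h2 : 2 ≤ (l : ℕ)) :
    child2 H l ∈ G.edgeSet := by
  rw [child2, SimpleGraph.mem_edgeSet, H.edge_iff]
  exact Or.inr ⟨l, h2, Or.inr rfl⟩

lemma edge_rep (H : Henneberg G) {e : Sym2 ι} (he : e ∈ G.edgeSet) :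
    e = s(H.ord ⟨0, by have := H.two_le; omega⟩, H.ord ⟨1, by have := H.two_le; omega⟩) ∨
      ∃ l : Fin (Nat.card ι), 2 ≤ (l : ℕ) ∧ (e = child1 H l ∨ e = child2 H l) := by
  induction e using Sym2.ind with
  | _ i j =>
    rw [SimpleGraph.mem_edgeSet, H.edge_iff] at he
    exact he

/-- `triGen` steps strictly decrease the edge index. -/
lemma triGen_eidx_lt {H : Henneberg G} {p : Conf ι} {e e' : Sym2 ι}
    (h : triGen H p e e') : eidx H e' < eidx H e := by
  obtain ⟨l, h2, -, rfl, he⟩ := h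
  rcases he with rfl | rfl
  · show eidx H (pedge H l) < eidx H (child1 H l)
    rw [eidx_child1 H h2]; exact eidx_pedge_lt H h2
  · show eidx H (pedge H l) < eidx H (child2 H l)
    rw [eidx_child2 H h2]; exact eidx_pedge_lt H h2

lemma triGen_left_mem {H : Henneberg G} {p : Conf ι} {e e' : Sym2 ι}
    (h : triGen H p e e') : e ∈ G.edgeSet := by
  obtain ⟨l, h2, -, -, he⟩ := h
  rcases he with rfl | rfl
  · exact child1_mem H h2
  · exact child2_mem H h2

lemma triGen_right_mem {H : Henneberg G} {p : Conf ι} {e e' : Sym2 ι}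
    (h : triGen H p e e') : e' ∈ G.edgeSet := by
  obtain ⟨l, h2, -, rfl, -⟩ := h
  exact pedge_mem H h2

/-- `triGen` is functional: an edge has at most one parent. -/
lemma triGen_functional {H : Henneberg G} {p : Conf ι} {e e₁ e₂ : Sym2 ι}
    (h1 : triGen H p e e₁) (h2 : triGen H p e e₂) : e₁ = e₂ := by
  obtain ⟨l, hl2, -, rfl, hel⟩ := h1
  obtain ⟨l', hl2', -, rfl, hel'⟩ := h2
  have hll : l = l' := by
    have h1 : eidx H e = l := by
      rcases hel with rfl | rfl
      exacts [eidx_child1 H hl2, eidx_child2 H hl2]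
    have h2 : eidx H e = l' := by
      rcases hel' with rfl | rfl
      exacts [eidx_child1 H hl2', eidx_child2 H hl2']
    rw [← h1, h2]
  rw [hll]

lemma reflTransGen_eqvGen {α : Type*} {r : α → α → Prop} {x y : α}
    (h : ReflTransGen r x y) : EqvGen r x y := by
  induction h with
  | refl => exact EqvGen.refl _
  | tail _ hr ih => exact EqvGen.trans _ _ _ ih (EqvGen.rel _ _ hr)

lemma eqvGen_triGen_join {H : Henneberg G} {p : Conf ι} {x y : Sym2 ι}
    (h : EqvGen (triGen H p) x y) : Join (ReflTransGen (triGen H p)) x y := by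
  have hcr : ∀ a b c, triGen H p a b → triGen H p a c →
      ∃ d, ReflGen (triGen H p) b d ∧ ReflTransGen (triGen H p) c d := by
    intro a b c hab hac
    exact ⟨b, ReflGen.refl, by rw [triGen_functional hac hab]⟩
  have heq : Equivalence (Join (ReflTransGen (triGen H p))) :=
    equivalence_join_reflTransGen hcr
  refine (Equivalence.eqvGen_iff heq).mp ?_
  exact Relation.EqvGen.mono (fun a b hab => ⟨b, ReflTransGen.single hab, ReflTransGen.refl⟩) _ _ h

/-- Comparability of chains from a common start, when the target has no parent. -/
lemma chain_to_root {H : Henneberg G} {p : Conf ι} {r : Sym2 ι}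
    (hnp : ∀ x, ¬ triGen H p r x) :
    ∀ {e a : Sym2 ι}, ReflTransGen (triGen H p) e a → ReflTransGen (triGen H p) e r →
      ReflTransGen (triGen H p) a r := by
  intro e a h
  induction h using ReflTransGen.head_induction_on with
  | refl => exact id
  | head hstep _ ih =>
    intro her
    rcases her.cases_head with rfl | ⟨c, hc, hcr⟩
    · exact absurd hstep (hnp _)
    · rw [triGen_functional hstep hc] at *
      exact ih hcr

lemma rtg_eidx_le {H : Henneberg G} {p : Conf ι} {e e' : Sym2 ι}
    (h : ReflTransGen (triGen H p) e e') : (eidx H e' : ℕ) ≤ (eidx H e : ℕ) := by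
  induction h with
  | refl => exact le_rfl
  | tail _ hr ih => exact le_trans (le_of_lt (triGen_eidx_lt hr)) ih

lemma exists_root (H : Henneberg G) (p : Conf ι) :
    ∀ (n : ℕ) (e : Sym2 ι), (eidx H e : ℕ) ≤ n →
      ∃ r : Sym2 ι, ReflTransGen (triGen H p) e r ∧ ∀ x, ¬ triGen H p r x := by
  intro n
  induction n with
  | zero =>
    intro e he
    refine ⟨e, ReflTransGen.refl, fun x hx => ?_⟩
    have := triGen_eidx_lt hx
    omega
  | succ n ih =>
    intro e he
    by_cases h : ∃ x, triGen H p e x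
    · obtain ⟨x, hx⟩ := h
      have hlt := triGen_eidx_lt hx
      obtain ⟨r, hr, hnp⟩ := ih x (by omega)
      exact ⟨r, ReflTransGen.head hx hr, hnp⟩
    · exact ⟨e, ReflTransGen.refl, fun x hx => h ⟨x, hx⟩⟩

lemma rtg_right_mem {H : Henneberg G} {p : Conf ι} {e r : Sym2 ι}
    (h : ReflTransGen (triGen H p) e r) (he : e ∈ G.edgeSet) : r ∈ G.edgeSet := by
  rcases h.cases_tail with rfl | ⟨b, -, hbr⟩
  · exact he
  · exact triGen_right_mem hbr

/-- A set contained in the affine span of two points is collinear. -/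
lemma collinear_of_subset_line {V : Type*} [NormedAddCommGroup V] [NormedSpace ℝ V]
    {A B : V} {s : Set V} (h : s ⊆ (affineSpan ℝ ({A, B} : Set V) : Set V)) :
    Collinear ℝ s := by
  have h1 : Collinear ℝ ({A, B} : Set V) := collinear_pair ℝ A B
  rw [collinear_iff_rank_le_one] at h1 ⊢
  refine le_trans (Submodule.rank_mono ?_) h1
  refine le_trans (vectorSpan_mono ℝ h) ?_
  rw [← AffineSubspace.direction_eq_vectorSpan, direction_affineSpan]

end Stmt5Aux

open Relation in
/-- Theorem 3.2(1) of the paper. Each class of the independent partition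
for `(G, p)` induces a sub-framework `(G_i, p_i)` such that `G_i` is a triangulated Laman
graph and `(G_i, p_i)` is a line framework. -/
theorem stmt5 {ι : Type*} [Fintype ι] (G : SimpleGraph ι) (hG : IsTriangulatedLaman G)
    (H : Henneberg G) (p : Conf ι) (hp : p ∈ configSpace G) :
    ∀ C ∈ indepPartition H p,
      IsTriangulatedLaman ((SimpleGraph.fromEdgeSet C).induce (classVerts C)) ∧
      Collinear ℝ (pt p '' classVerts C) := by
  classical
  rintro C ⟨e, heE, rfl⟩
  set C : Set (Sym2 ι) :=
    {e' | e' ∈ G.edgeSet ∧ Relation.EqvGen (triGen H p) e e'} with hCdef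
  -- the root of the class
  obtain ⟨r, her, hnp⟩ := exists_root H p (eidx H e) e le_rfl
  have hrE : r ∈ G.edgeSet := rtg_right_mem her heE
  -- characterization of the class
  have hCchar : ∀ e', e' ∈ C ↔ (e' ∈ G.edgeSet ∧ ReflTransGen (triGen H p) e' r) := by
    intro e'
    constructor
    · rintro ⟨hE', hR⟩
      obtain ⟨a, hea, he'a⟩ := eqvGen_triGen_join hR
      exact ⟨hE', he'a.trans (chain_to_root hnp hea her)⟩
    · rintro ⟨hE', hR⟩
      exact ⟨hE', Relation.EqvGen.trans _ _ _ (reflTransGen_eqvGen her)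
        (Relation.EqvGen.symm _ _ (reflTransGen_eqvGen hR))⟩
  have hrC : r ∈ C := (hCchar r).mpr ⟨hrE, ReflTransGen.refl⟩
  -- the endpoints of the root
  obtain ⟨a, b, hab, hreq⟩ : ∃ a b : Fin (Nat.card ι), a < b ∧ r = s(H.ord a, H.ord b) := by
    rcases edge_rep H hrE with h | ⟨l, h2, h | h⟩
    · exact ⟨_, _, by simp [Fin.lt_def], h⟩
    · exact ⟨_, _, H.par1_lt l h2, h⟩
    · exact ⟨_, _, H.par2_lt l h2, h⟩
  have heidx_r : eidx H r = b := by
    rw [hreq, eidx_ord, max_eq_right hab.le]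
  -- the set of steps contributing to the class
  set S : Set (Fin (Nat.card ι)) :=
    {l | 2 ≤ (l : ℕ) ∧
      Collinear ℝ {pt p (H.ord (H.par1 l)), pt p (H.ord (H.par2 l)), pt p (H.ord l)} ∧
      pedge H l ∈ C} with hSdef
  have hC_cases : ∀ e' ∈ C, e' = r ∨ ∃ l ∈ S, e' = child1 H l ∨ e' = child2 H l := by
    intro e' he'
    obtain ⟨hE', hR⟩ := (hCchar e').mp he'
    rcases hR.cases_head with rfl | ⟨c, hc, hcr⟩
    · exact Or.inl rfl
    · obtain ⟨l, h2, hcol, rfl, hch⟩ := hc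
      exact Or.inr ⟨l, ⟨h2, hcol, (hCchar _).mpr ⟨pedge_mem H h2, hcr⟩⟩, hch⟩
  have hchild_mem : ∀ l ∈ S, child1 H l ∈ C ∧ child2 H l ∈ C := by
    rintro l ⟨h2, hcol, hpC⟩
    obtain ⟨-, hRp⟩ := (hCchar _).mp hpC
    constructor
    · exact (hCchar _).mpr ⟨child1_mem H h2,
        ReflTransGen.head ⟨l, h2, hcol, rfl, Or.inl rfl⟩ hRp⟩
    · exact (hCchar _).mpr ⟨child2_mem H h2,
        ReflTransGen.head ⟨l, h2, hcol, rfl, Or.inr rfl⟩ hRp⟩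
  have hS_gt : ∀ l ∈ S, b < l := by
    rintro l ⟨h2, -, hpC⟩
    obtain ⟨-, hRp⟩ := (hCchar _).mp hpC
    have h1 : (eidx H r : ℕ) ≤ (eidx H (pedge H l) : ℕ) := rtg_eidx_le hRp
    have h2' : eidx H (pedge H l) < l := eidx_pedge_lt H h2
    rw [heidx_r] at h1
    rw [Fin.lt_def] at h2' ⊢
    omega
  -- vertices of the class
  have hV_sub : ∀ n : ℕ, ∀ e' ∈ C, (eidx H e' : ℕ) ≤ n → ∀ v ∈ e',
      H.ord.symm v = a ∨ H.ord.symm v = b ∨ H.ord.symm v ∈ S := by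
    intro n
    induction n with
    | zero =>
      intro e' he' hle v hv
      rcases hC_cases e' he' with rfl | ⟨l, hlS, h | h⟩
      · rw [hreq] at hv
        rcases Sym2.mem_iff.mp hv with rfl | rfl
        · exact Or.inl (by simp)
        · exact Or.inr (Or.inl (by simp))
      · exfalso
        subst h
        have hbl := Fin.lt_def.mp (hS_gt l hlS)
        have h2 : 2 ≤ (l : ℕ) := hlS.1
        have heq : (eidx H (child1 H l) : ℕ) = l := by rw [eidx_child1 H h2]
        omega
      · exfalso
        subst h
        have hbl := Fin.lt_def.mp (hS_gt l hlS)
        have h2 : 2 ≤ (l : ℕ) := hlS.1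
        have heq : (eidx H (child2 H l) : ℕ) = l := by rw [eidx_child2 H h2]
        omega
    | succ n ih =>
      intro e' he' hle v hv
      rcases hC_cases e' he' with rfl | ⟨l, hlS, h | h⟩
      · rw [hreq] at hv
        rcases Sym2.mem_iff.mp hv with rfl | rfl
        · exact Or.inl (by simp)
        · exact Or.inr (Or.inl (by simp))
      · subst h
        have h2 : 2 ≤ (l : ℕ) := hlS.1
        rcases Sym2.mem_iff.mp hv with rfl | rfl
        · -- v = ord (par1 l): a vertex of pedge l
          have hpe : pedge H l ∈ C := hlS.2.2
          have hlt : (eidx H (pedge H l) : ℕ) ≤ n := by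
            have := eidx_pedge_lt H h2
            have heq : (eidx H (child1 H l) : ℕ) = l := by rw [eidx_child1 H h2]
            rw [Fin.lt_def] at this
            omega
          exact ih _ hpe hlt _ (by rw [pedge]; exact Sym2.mem_mk_left _ _)
        · exact Or.inr (Or.inr (by simpa using hlS))
      · subst h
        have h2 : 2 ≤ (l : ℕ) := hlS.1
        rcases Sym2.mem_iff.mp hv with rfl | rfl
        · have hpe : pedge H l ∈ C := hlS.2.2
          have hlt : (eidx H (pedge H l) : ℕ) ≤ n := by
            have := eidx_pedge_lt H h2
            have heq : (eidx H (child2 H l) : ℕ) = l := by rw [eidx_child2 H h2]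
            rw [Fin.lt_def] at this
            omega
          exact ih _ hpe hlt _ (by rw [pedge]; exact Sym2.mem_mk_right _ _)
        · exact Or.inr (Or.inr (by simpa using hlS))
  -- collinearity
  have hABne : pt p (H.ord a) ≠ pt p (H.ord b) := by
    apply hp
    rw [← SimpleGraph.mem_edgeSet, ← hreq]
    exact hrE
  set line := affineSpan ℝ ({pt p (H.ord a), pt p (H.ord b)} : Set Pt) with hline_def
  have hr_pt : ∀ v ∈ r, pt p v ∈ line := by
    intro v hv
    rw [hreq] at hv
    rcases Sym2.mem_iff.mp hv with rfl | rfl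
    · exact subset_affineSpan ℝ _ (Set.mem_insert _ _)
    · exact subset_affineSpan ℝ _ (Set.mem_insert_of_mem _ rfl)
  have hline : ∀ n : ℕ, ∀ e' ∈ C, (eidx H e' : ℕ) ≤ n → ∀ v ∈ e',
      pt p v ∈ line := by
    intro n
    induction n with
    | zero =>
      intro e' he' hle v hv
      rcases hC_cases e' he' with rfl | ⟨l, hlS, h | h⟩
      · exact hr_pt v hv
      · exfalso
        subst h
        have h2 : 2 ≤ (l : ℕ) := hlS.1
        have heq : (eidx H (child1 H l) : ℕ) = l := by rw [eidx_child1 H h2]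
        omega
      · exfalso
        subst h
        have h2 : 2 ≤ (l : ℕ) := hlS.1
        have heq : (eidx H (child2 H l) : ℕ) = l := by rw [eidx_child2 H h2]
        omega
    | succ n ih =>
      intro e' he' hle v hv
      rcases hC_cases e' he' with rfl | ⟨l, hlS, h | h⟩
      · exact hr_pt v hv
      all_goals {
        subst h
        have h2 : 2 ≤ (l : ℕ) := hlS.1
        have hpe : pedge H l ∈ C := hlS.2.2
        have hlt : (eidx H (pedge H l) : ℕ) ≤ n := by
          have h3 := Fin.lt_def.mp (eidx_pedge_lt H h2)
          have heq1 : (eidx H (child1 H l) : ℕ) = l := by rw [eidx_child1 H h2]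
          have heq2 : (eidx H (child2 H l) : ℕ) = l := by rw [eidx_child2 H h2]
          omega
        have hP1 : pt p (H.ord (H.par1 l)) ∈ line :=
          ih _ hpe hlt _ (by rw [pedge]; exact Sym2.mem_mk_left _ _)
        have hP2 : pt p (H.ord (H.par2 l)) ∈ line :=
          ih _ hpe hlt _ (by rw [pedge]; exact Sym2.mem_mk_right _ _)
        have hP12 : pt p (H.ord (H.par1 l)) ≠ pt p (H.ord (H.par2 l)) :=
          hp _ _ (H.par_adj l h2)
        have hQ : pt p (H.ord l) ∈ line := by
          have hmem := hlS.2.1.mem_affineSpan_of_mem_of_ne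
            (Set.mem_insert _ _)
            (Set.mem_insert_of_mem _ (Set.mem_insert _ _))
            (Set.mem_insert_of_mem _ (Set.mem_insert_of_mem _ rfl)) hP12
          have hle2 : affineSpan ℝ
              ({pt p (H.ord (H.par1 l)), pt p (H.ord (H.par2 l))} : Set Pt) ≤ line :=
            affineSpan_le.mpr (by
              rw [Set.insert_subset_iff, Set.singleton_subset_iff]
              exact ⟨hP1, hP2⟩)
          exact hle2 hmem
        first
        | · rcases Sym2.mem_iff.mp hv with rfl | rfl
            · exact hP1
            · exact hQ
        | · rcases Sym2.mem_iff.mp hv with rfl | rfl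
            · exact hP2
            · exact hQ
      }
  have hcol : Collinear ℝ (pt p '' classVerts C) := by
    apply collinear_of_subset_line (A := pt p (H.ord a)) (B := pt p (H.ord b))
    rintro - ⟨v, ⟨e', he', hv⟩, rfl⟩
    exact hline (eidx H e') e' he' le_rfl v hv
  refine ⟨?_, hcol⟩
  -- the Laman structure
  set VC := classVerts C with hVCdef
  have hmemV : ∀ v : ι, v ∈ VC ↔
      (H.ord.symm v = a ∨ H.ord.symm v = b ∨ H.ord.symm v ∈ S) := by
    intro v
    constructor
    · rintro ⟨e', he', hv⟩
      exact hV_sub (eidx H e') e' he' le_rfl v hv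
    · rintro (hv | hv | hv)
      · have hva : v = H.ord a := by rw [← hv, Equiv.apply_symm_apply]
        exact ⟨r, hrC, by rw [hreq]; exact Sym2.mem_iff.mpr (Or.inl hva)⟩
      · have hvb : v = H.ord b := by rw [← hv, Equiv.apply_symm_apply]
        exact ⟨r, hrC, by rw [hreq]; exact Sym2.mem_iff.mpr (Or.inr hvb)⟩
      · have hvl : v = H.ord (H.ord.symm v) := (H.ord.apply_symm_apply v).symm
        exact ⟨child1 H (H.ord.symm v), (hchild_mem _ hv).1,
          by rw [child1]; exact Sym2.mem_iff.mpr (Or.inr hvl)⟩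
  have hSfin : S.Finite := Set.toFinite S
  set T : Finset (Fin (Nat.card ι)) := insert a (insert b hSfin.toFinset) with hTdef
  have hTmem : ∀ t, t ∈ T ↔ (t = a ∨ t = b ∨ t ∈ S) := by
    intro t; simp only [hTdef, Finset.mem_insert, Set.Finite.mem_toFinset]
  have hmemV' : ∀ v : ι, v ∈ VC ↔ H.ord.symm v ∈ T := by
    intro v; rw [hmemV, hTmem]
  have hVset : VC = H.ord '' ↑T := by
    ext v
    rw [hmemV']
    constructor
    · intro h; exact ⟨_, h, H.ord.apply_symm_apply v⟩
    · rintro ⟨t, ht, rfl⟩; rwa [Equiv.symm_apply_apply]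
  have hkT : T.card = Nat.card ↥VC := by
    rw [Nat.card_coe_set_eq, hVset, Set.ncard_image_of_injective _ H.ord.injective,
      Set.ncard_coe_finset]
  set k := Nat.card ↥VC with hkdef
  have haT : a ∈ T := (hTmem a).mpr (Or.inl rfl)
  have hbT : b ∈ T := (hTmem b).mpr (Or.inr (Or.inl rfl))
  have hk2 : 2 ≤ k := by
    rw [← hkT]
    have hsub : ({a, b} : Finset _) ⊆ T := by
      intro t ht
      rcases Finset.mem_insert.mp ht with rfl | ht
      · exact haT
      · rw [Finset.mem_singleton] at ht; subst ht; exact hbT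
    calc 2 = ({a, b} : Finset _).card := (Finset.card_pair hab.ne).symm
    _ ≤ T.card := Finset.card_le_card hsub
  set iso := T.orderIsoOfFin hkT with hisodef
  have hmin : ∀ t ∈ T, a ≤ t := by
    intro t ht
    rcases (hTmem t).mp ht with rfl | rfl | ht
    · exact le_rfl
    · exact hab.le
    · exact (hab.trans (hS_gt t ht)).le
  have hiso0 : ((iso ⟨0, by omega⟩ : {x // x ∈ T}) : Fin (Nat.card ι)) = a := by
    refine le_antisymm ?_ (hmin _ (iso ⟨0, by omega⟩).2)
    have h0le : (⟨0, by omega⟩ : Fin k) ≤ iso.symm ⟨a, haT⟩ := by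
      simp [Fin.le_def]
    have := iso.monotone h0le
    rw [OrderIso.apply_symm_apply] at this
    exact_mod_cast this
  have hiso1 : ((iso ⟨1, by omega⟩ : {x // x ∈ T}) : Fin (Nat.card ι)) = b := by
    refine le_antisymm ?_ ?_
    · have hj1 : iso.symm ⟨b, hbT⟩ ≠ (⟨0, by omega⟩ : Fin k) := by
        intro h
        apply hab.ne
        have := congrArg (fun x => ((iso x : {x // x ∈ T}) : Fin (Nat.card ι))) h
        simp only [OrderIso.apply_symm_apply] at this
        rw [hiso0] at this
        exact this.symm
      have h1le : (⟨1, by omega⟩ : Fin k) ≤ iso.symm ⟨b, hbT⟩ := by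
        have hne : ((iso.symm ⟨b, hbT⟩ : Fin k) : ℕ) ≠ 0 := by
          intro h
          exact hj1 (Fin.ext h)
        exact Fin.le_def.mpr (show (1:ℕ) ≤ _ from Nat.one_le_iff_ne_zero.mpr hne)
      have := iso.monotone h1le
      rw [OrderIso.apply_symm_apply] at this
      exact_mod_cast this
    · rcases (hTmem _).mp (iso ⟨1, by omega⟩).2 with h | h | h
      · exfalso
        have : (iso ⟨1, by omega⟩ : {x // x ∈ T}) = iso ⟨0, by omega⟩ :=
          Subtype.ext (h.trans hiso0.symm)
        have h01 := iso.injective this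
        simp [Fin.ext_iff] at h01
      · exact h.ge
      · exact (hS_gt _ h).le
  have hisoS : ∀ j : Fin k, 2 ≤ (j : ℕ) → ((iso j : {x // x ∈ T}) : Fin (Nat.card ι)) ∈ S := by
    intro j hj
    rcases (hTmem _).mp (iso j).2 with h | h | h
    · exfalso
      have h0 : (iso j : {x // x ∈ T}) = iso ⟨0, by omega⟩ := Subtype.ext (h.trans hiso0.symm)
      have h0' := iso.injective h0
      rw [h0'] at hj
      simp at hj
    · exfalso
      have h0 : (iso j : {x // x ∈ T}) = iso ⟨1, by omega⟩ := Subtype.ext (h.trans hiso1.symm)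
      have h0' := iso.injective h0
      rw [h0'] at hj
      simp at hj
    · exact h
  have hordmemV : ∀ t : Fin (Nat.card ι), t ∈ T → H.ord t ∈ VC := by
    intro t ht
    rw [hmemV']
    rwa [Equiv.symm_apply_apply]
  have hparT : ∀ j : Fin k, 2 ≤ (j : ℕ) →
      H.par1 ((iso j : {x // x ∈ T}) : Fin (Nat.card ι)) ∈ T ∧
      H.par2 ((iso j : {x // x ∈ T}) : Fin (Nat.card ι)) ∈ T := by
    intro j hj
    have hS' := hisoS j hj
    have hpC : pedge H _ ∈ C := hS'.2.2
    constructor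
    · have h1 : H.ord (H.par1 _) ∈ VC :=
        ⟨pedge H _, hpC, by rw [pedge]; exact Sym2.mem_mk_left _ _⟩
      have := (hmemV' _).mp h1
      rwa [Equiv.symm_apply_apply] at this
    · have h1 : H.ord (H.par2 _) ∈ VC :=
        ⟨pedge H _, hpC, by rw [pedge]; exact Sym2.mem_mk_right _ _⟩
      have := (hmemV' _).mp h1
      rwa [Equiv.symm_apply_apply] at this
  -- the equivalence between `Fin k` and the class vertices
  let eqv : {x // x ∈ T} ≃ ↥VC :=
    { toFun := fun t => ⟨H.ord t.1, hordmemV t.1 t.2⟩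
      invFun := fun v => ⟨H.ord.symm v.1, (hmemV' v.1).mp v.2⟩
      left_inv := fun t => by apply Subtype.ext; simp
      right_inv := fun v => by apply Subtype.ext; simp }
  let ordC : Fin k ≃ ↥VC := iso.toEquiv.trans eqv
  have hordC : ∀ j : Fin k, (ordC j : ι) = H.ord ((iso j : {x // x ∈ T}) : Fin (Nat.card ι)) :=
    fun j => rfl
  let par1C : Fin k → Fin k := fun j =>
    if h : 2 ≤ (j : ℕ) then
      iso.symm ⟨H.par1 ((iso j : {x // x ∈ T}) : Fin (Nat.card ι)), (hparT j h).1⟩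
    else ⟨0, by omega⟩
  let par2C : Fin k → Fin k := fun j =>
    if h : 2 ≤ (j : ℕ) then
      iso.symm ⟨H.par2 ((iso j : {x // x ∈ T}) : Fin (Nat.card ι)), (hparT j h).2⟩
    else ⟨0, by omega⟩
  have hpar1C : ∀ (j : Fin k) (h : 2 ≤ (j : ℕ)),
      ((iso (par1C j) : {x // x ∈ T}) : Fin (Nat.card ι)) =
        H.par1 ((iso j : {x // x ∈ T}) : Fin (Nat.card ι)) := by
    intro j h
    have e1 : par1C j = iso.symm
        ⟨H.par1 ((iso j : {x // x ∈ T}) : Fin (Nat.card ι)), (hparT j h).1⟩ := dif_pos h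
    rw [e1, OrderIso.apply_symm_apply]
  have hpar2C : ∀ (j : Fin k) (h : 2 ≤ (j : ℕ)),
      ((iso (par2C j) : {x // x ∈ T}) : Fin (Nat.card ι)) =
        H.par2 ((iso j : {x // x ∈ T}) : Fin (Nat.card ι)) := by
    intro j h
    have e1 : par2C j = iso.symm
        ⟨H.par2 ((iso j : {x // x ∈ T}) : Fin (Nat.card ι)), (hparT j h).2⟩ := dif_pos h
    rw [e1, OrderIso.apply_symm_apply]
  have hS2 : ∀ (j : Fin k) (h : 2 ≤ (j : ℕ)),
      2 ≤ (((iso j : {x // x ∈ T}) : Fin (Nat.card ι)) : ℕ) := fun j h => (hisoS j h).1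
  have hadj : ∀ u v : ↥VC, ((SimpleGraph.fromEdgeSet C).induce VC).Adj u v ↔
      (s((u : ι), (v : ι)) ∈ C ∧ (u : ι) ≠ (v : ι)) := by
    intro u v
    simp [SimpleGraph.comap_adj, Function.Embedding.coe_subtype,
      SimpleGraph.fromEdgeSet_adj, SimpleGraph.induce]
  have hmapinj : Function.Injective (Sym2.map (Subtype.val : ↥VC → ι)) :=
    Sym2.map.injective Subtype.val_injective
  have hmap : ∀ u v : ↥VC, Sym2.map Subtype.val s(u, v) = s((u : ι), (v : ι)) :=
    fun u v => Sym2.map_pair_eq _ _ _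
  have hc0 : ((ordC ⟨0, by omega⟩ : ↥VC) : ι) = H.ord a := by rw [hordC, hiso0]
  have hc1 : ((ordC ⟨1, by omega⟩ : ↥VC) : ι) = H.ord b := by rw [hordC, hiso1]
  refine Or.inr ⟨⟨hk2, ordC, par1C, par2C, ?_, ?_, ?_, ?_, ?_⟩⟩
  · -- par1_lt
    intro j h2
    rw [← iso.lt_iff_lt, ← Subtype.coe_lt_coe, hpar1C j h2]
    exact H.par1_lt _ (hS2 j h2)
  · -- par2_lt
    intro j h2
    rw [← iso.lt_iff_lt, ← Subtype.coe_lt_coe, hpar2C j h2]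
    exact H.par2_lt _ (hS2 j h2)
  · -- par_ne
    intro j h2 hEq
    apply H.par_ne _ (hS2 j h2)
    rw [← hpar1C j h2, ← hpar2C j h2, hEq]
  · -- par_adj
    intro j h2
    rw [hadj]
    constructor
    · rw [hordC, hordC, hpar1C j h2, hpar2C j h2]
      exact (hisoS j h2).2.2
    · rw [hordC, hordC, hpar1C j h2, hpar2C j h2]
      exact fun hEq => H.par_ne _ (hS2 j h2) (H.ord.injective hEq)
  · -- edge_iff
    intro u v
    rw [hadj]
    constructor
    · rintro ⟨hC', hne⟩
      rcases hC_cases _ hC' with h | ⟨l, hlS, h | h⟩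
      · left
        apply hmapinj
        rw [hmap, hmap, hc0, hc1, h, hreq]
      · right
        have hlT : l ∈ T := (hTmem l).mpr (Or.inr (Or.inr hlS))
        have hbl : b < l := hS_gt l hlS
        set m := iso.symm ⟨l, hlT⟩ with hm
        have hisom : ((iso m : {x // x ∈ T}) : Fin (Nat.card ι)) = l := by
          rw [hm, OrderIso.apply_symm_apply]
        have hm2 : 2 ≤ (m : ℕ) := by
          have hm0 : (m : ℕ) ≠ 0 := by
            intro hEq
            have : m = (⟨0, by omega⟩ : Fin k) := Fin.ext hEq
            rw [this, hiso0] at hisom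
            exact absurd hisom.symm (ne_of_gt (hab.trans hbl))
          have hm1 : (m : ℕ) ≠ 1 := by
            intro hEq
            have : m = (⟨1, by omega⟩ : Fin k) := Fin.ext hEq
            rw [this, hiso1] at hisom
            exact absurd hisom.symm (ne_of_gt hbl)
          omega
        refine ⟨m, hm2, Or.inl ?_⟩
        apply hmapinj
        rw [hmap, hmap, hordC, hordC, hpar1C m hm2, hisom, h, child1]
      · right
        have hlT : l ∈ T := (hTmem l).mpr (Or.inr (Or.inr hlS))
        have hbl : b < l := hS_gt l hlS
        set m := iso.symm ⟨l, hlT⟩ with hm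
        have hisom : ((iso m : {x // x ∈ T}) : Fin (Nat.card ι)) = l := by
          rw [hm, OrderIso.apply_symm_apply]
        have hm2 : 2 ≤ (m : ℕ) := by
          have hm0 : (m : ℕ) ≠ 0 := by
            intro hEq
            have : m = (⟨0, by omega⟩ : Fin k) := Fin.ext hEq
            rw [this, hiso0] at hisom
            exact absurd hisom.symm (ne_of_gt (hab.trans hbl))
          have hm1 : (m : ℕ) ≠ 1 := by
            intro hEq
            have : m = (⟨1, by omega⟩ : Fin k) := Fin.ext hEq
            rw [this, hiso1] at hisom
            exact absurd hisom.symm (ne_of_gt hbl)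
          omega
        refine ⟨m, hm2, Or.inr ?_⟩
        apply hmapinj
        rw [hmap, hmap, hordC, hordC, hpar2C m hm2, hisom, h, child2]
    · have hnepair : ∀ (x y : ι), s((u : ι), (v : ι)) = s(x, y) → x ≠ y →
          (u : ι) ≠ (v : ι) := by
        intro x y h' hxy
        rcases Sym2.eq_iff.mp h' with ⟨h1, h2⟩ | ⟨h1, h2⟩
        · rw [h1, h2]; exact hxy
        · rw [h1, h2]; exact hxy.symm
      rintro (h | ⟨m, hm2, h | h⟩)
      · have h' := congrArg (Sym2.map (Subtype.val : ↥VC → ι)) h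
        rw [hmap, hmap, hc0, hc1] at h'
        refine ⟨by rw [h', ← hreq]; exact hrC, ?_⟩
        exact hnepair _ _ h' (fun hEq => hab.ne (H.ord.injective hEq))
      · have h' := congrArg (Sym2.map (Subtype.val : ↥VC → ι)) h
        rw [hmap, hmap, hordC, hordC, hpar1C m hm2] at h'
        have hlS := hisoS m hm2
        refine ⟨by rw [h']; exact (hchild_mem _ hlS).1, ?_⟩
        refine hnepair _ _ h' (fun hEq => ?_)
        exact absurd (H.ord.injective hEq) (H.par1_lt _ (hS2 m hm2)).ne
      · have h' := congrArg (Sym2.map (Subtype.val : ↥VC → ι)) h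
        rw [hmap, hmap, hordC, hordC, hpar2C m hm2] at h'
        have hlS := hisoS m hm2
        refine ⟨by rw [h']; exact (hchild_mem _ hlS).2, ?_⟩
        refine hnepair _ _ h' (fun hEq => ?_)
        exact absurd (H.ord.injective hEq) (H.par2_lt _ (hS2 m hm2)).ne
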